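/- Let G be an infinite abelian group such that G/m·G is finite for every 1 ≤ m ≤ h. If A ⊆ G satisfies ⋃_{i=1}^h iA ∼ G and ⟨A − A⟩ = G, then A is a basis of order at most h² + h·max_{1 ≤ m ≤ h} Ω(|G/m·G|) + h − 1. -/

import Mathlib

open Pointwise

/-- `itSum A n` is the `n`-fold sumset of `A` (sums of exactly `n` elements of `A`). -/
def itSum {G : Type*} [AddCommGroup G] (A : Set G) : ℕ → Set G
  | 0 => {0}
  | n + 1 => itSum A n + A

/-- `SimEq A B` means the symmetric difference of `A` and `B` is finite. -/
def SimEq {G : Type*} [AddCommGroup G] (A B : Set G) : Prop :=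
  (symmDiff A B).Finite

/-- The subgroup `m·G = {m • g : g ∈ G}`. -/
def mulSubgroup (G : Type*) [AddCommGroup G] (m : ℕ) : AddSubgroup G :=
  (m • AddMonoidHom.id G).range

namespace Stmt13Aux

variable {G : Type*} [AddCommGroup G]

theorem itSum_succ (A : Set G) (n : ℕ) : itSum A (n + 1) = itSum A n + A := rfl

theorem zero_mem_itSum_zero (A : Set G) : (0 : G) ∈ itSum A 0 := rfl

theorem add_mem_itSum {A : Set G} {x y : G} {m n : ℕ}
    (hx : x ∈ itSum A m) (hy : y ∈ itSum A n) : x + y ∈ itSum A (m + n) := by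
  induction n generalizing y with
  | zero =>
    have hy0 : y = 0 := by simpa [itSum] using hy
    simpa [hy0] using hx
  | succ n ih =>
    rw [itSum_succ] at hy
    rcases Set.mem_add.mp hy with ⟨y', hy', a, ha, rfl⟩
    have h1 := ih hy'
    have h2 : (x + y') + a ∈ itSum A (m + n) + A := Set.add_mem_add h1 ha
    rw [← itSum_succ] at h2
    have : x + (y' + a) = (x + y') + a := by abel
    rw [this]
    exact h2

theorem mem_itSum_one {A : Set G} {a : G} (ha : a ∈ A) : a ∈ itSum A 1 := by
  rw [itSum_succ]
  have : (0 : G) + a ∈ itSum A 0 + A := Set.add_mem_add (zero_mem_itSum_zero A) ha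
  simpa using this

theorem itSum_finite {A : Set G} (hA : A.Finite) (n : ℕ) : (itSum A n).Finite := by
  induction n with
  | zero => simp [itSum]
  | succ n ih => rw [itSum_succ]; exact ih.add hA


/-- There is an element with representations of lengths `p` and `p+g`, at level `≤ h+1`. -/
def HasWit (A : Set G) (h g : ℕ) : Prop :=
  ∃ p : ℕ, ∃ y : G, 1 ≤ p ∧ p + g ≤ h + 1 ∧ y ∈ itSum A p ∧ y ∈ itSum A (p + g)

open Classical in
noncomputable def gapSet (A : Set G) (h : ℕ) : Finset ℕ :=
  (Finset.Icc 1 h).filter fun g => HasWit A h g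

noncomputable def egcd (A : Set G) (h : ℕ) : ℕ := (gapSet A h).gcd id

theorem mem_gapSet {A : Set G} {h g : ℕ} (h1 : 1 ≤ g) (h2 : g ≤ h) (hw : HasWit A h g) :
    g ∈ gapSet A h := by
  classical
  simp only [gapSet, Finset.mem_filter, Finset.mem_Icc]
  exact ⟨⟨h1, h2⟩, hw⟩

theorem gap_low {A : Set G} {h : ℕ} {y : G} {p q : ℕ}
    (hp1 : 1 ≤ p) (hp2 : p ≤ h + 1) (hq1 : 1 ≤ q) (hq2 : q ≤ h + 1)
    (hyp : y ∈ itSum A p) (hyq : y ∈ itSum A q) :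
    ((egcd A h : ℤ)) ∣ (p : ℤ) - q := by
  rcases eq_or_ne p q with hpq | hpq
  · simp [hpq]
  have key : ∀ p' q' : ℕ, 1 ≤ p' → q' ≤ h + 1 → p' < q' → y ∈ itSum A p' → y ∈ itSum A q' →
      (egcd A h) ∣ (q' - p') := by
    intro p' q' h1 h2 h3 hy1 hy2
    have hg1 : 1 ≤ q' - p' := by omega
    have hg2 : q' - p' ≤ h := by omega
    have hw : HasWit A h (q' - p') := by
      refine ⟨p', y, h1, by omega, hy1, ?_⟩
      have : p' + (q' - p') = q' := by omega
      rw [this]; exact hy2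
    have : (gapSet A h).gcd id ∣ id (q' - p') := Finset.gcd_dvd (mem_gapSet hg1 hg2 hw)
    simpa [egcd] using this
  rcases lt_or_gt_of_ne hpq with hlt | hlt
  · have hd := key p q hp1 hq2 hlt hyp hyq
    have : ((egcd A h : ℤ)) ∣ ((q - p : ℕ) : ℤ) := Int.natCast_dvd_natCast.mpr hd
    have heq : ((q - p : ℕ) : ℤ) = (q : ℤ) - p := by omega
    rw [heq] at this
    simpa using this.neg_right
  · have hd := key q p hq1 hp2 hlt hyq hyp
    have : ((egcd A h : ℤ)) ∣ ((p - q : ℕ) : ℤ) := Int.natCast_dvd_natCast.mpr hd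
    have heq : ((p - q : ℕ) : ℤ) = (p : ℤ) - q := by omega
    rwa [heq] at this


section WithCover

variable [Infinite G] {A : Set G} {h : ℕ} {F : Set G}

theorem transport (hF : F.Finite)
    (hcov : ∀ x : G, x ∉ F → ∃ i, 1 ≤ i ∧ i ≤ h ∧ x ∈ itSum A i) :
    ∀ (n : ℕ) (w : G), w ∈ itSum A n → ∃ Bad : Set G, Bad.Finite ∧
      ∀ x : G, x ∉ Bad → ∀ i k, 1 ≤ i → i ≤ h → x ∈ itSum A i →
        1 ≤ k → k ≤ h → x + w ∈ itSum A k → ((egcd A h : ℤ)) ∣ (i : ℤ) + n - k := by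
  intro n
  induction n with
  | zero =>
    intro w hw
    refine ⟨∅, Set.finite_empty, ?_⟩
    have hw0 : w = 0 := by simpa [itSum] using hw
    intro x _ i k hi1 hih hxi hk1 hkh hxk
    rw [hw0, add_zero] at hxk
    have := gap_low hi1 (le_trans hih (Nat.le_succ h)) hk1 (le_trans hkh (Nat.le_succ h)) hxi hxk
    simpa using this
  | succ n ih =>
    intro w hw
    rw [itSum_succ] at hw
    rcases Set.mem_add.mp hw with ⟨w', hw', a, ha, rfl⟩
    rcases ih w' hw' with ⟨Bad', hBad', H⟩
    refine ⟨Bad' ∪ ((fun x => x + w') ⁻¹' F),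
      hBad'.union (hF.preimage (Function.Injective.injOn (add_left_injective w'))), ?_⟩
    intro x hx i k hi1 hih hxi hk1 hkh hxk
    have hx1 : x ∉ Bad' := fun c => hx (Or.inl c)
    have hx2 : x + w' ∉ F := fun c => hx (Or.inr c)
    rcases hcov (x + w') hx2 with ⟨k', hk'1, hk'h, hk'⟩
    have d1 := H x hx1 i k' hi1 hih hxi hk'1 hk'h hk'
    have hz : (x + w') + a ∈ itSum A (k' + 1) := add_mem_itSum hk' (mem_itSum_one ha)
    have hz2 : (x + w') + a ∈ itSum A k := by
      have : (x + w') + a = x + (w' + a) := by abel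
      rw [this]; exact hxk
    have d2 := gap_low (A := A) (h := h) (p := k' + 1) (q := k) (by omega) (by omega) hk1 (by omega) hz hz2
    have hsum := dvd_add d1 d2
    have : (i : ℤ) + n - k' + ((k' + 1 : ℕ) - k) = (i : ℤ) + (n + 1 : ℕ) - k := by
      push_cast; ring
    rwa [this] at hsum

omit [AddCommGroup G] in
theorem exists_avoid (S : Set G) (hS : S.Finite) : ∃ x : G, x ∉ S := by
  rcases hS.infinite_compl.nonempty with ⟨x, hx⟩
  exact ⟨x, hx⟩

theorem gap_all (hF : F.Finite)
    (hcov : ∀ x : G, x ∉ F → ∃ i, 1 ≤ i ∧ i ≤ h ∧ x ∈ itSum A i) :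
    ∀ (y : G) (n m : ℕ), y ∈ itSum A n → y ∈ itSum A m →
      ((egcd A h : ℤ)) ∣ (n : ℤ) - m := by
  intro y n m hn hm
  rcases transport hF hcov n y hn with ⟨B1, hB1, H1⟩
  rcases transport hF hcov m y hm with ⟨B2, hB2, H2⟩
  have hfin : (B1 ∪ B2 ∪ F ∪ ((fun x => x + y) ⁻¹' F)).Finite :=
    ((hB1.union hB2).union hF).union (hF.preimage (Function.Injective.injOn (add_left_injective y)))
  rcases exists_avoid _ hfin with ⟨x, hx⟩
  have hxB1 : x ∉ B1 := fun c => hx (Or.inl (Or.inl (Or.inl c)))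
  have hxB2 : x ∉ B2 := fun c => hx (Or.inl (Or.inl (Or.inr c)))
  have hxF : x ∉ F := fun c => hx (Or.inl (Or.inr c))
  have hxyF : x + y ∉ F := fun c => hx (Or.inr c)
  rcases hcov x hxF with ⟨i, hi1, hih, hxi⟩
  rcases hcov (x + y) hxyF with ⟨k, hk1, hkh, hxk⟩
  have d1 := H1 x hxB1 i k hi1 hih hxi hk1 hkh hxk
  have d2 := H2 x hxB2 i k hi1 hih hxi hk1 hkh hxk
  have := dvd_sub d1 d2
  have heq : ((i : ℤ) + n - k) - ((i : ℤ) + m - k) = (n : ℤ) - m := by ring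
  rwa [heq] at this

theorem A_infinite (hF : F.Finite)
    (hcov : ∀ x : G, x ∉ F → ∃ i, 1 ≤ i ∧ i ≤ h ∧ x ∈ itSum A i) : A.Infinite := by
  by_contra hA
  rw [Set.not_infinite] at hA
  have hU : ((⋃ i ∈ Finset.Icc 1 h, itSum A i : Set G)).Finite := by
    apply Set.Finite.biUnion (Finset.Icc 1 h).finite_toSet
    intro i _
    exact itSum_finite hA i
  have hsub : (Set.univ : Set G) ⊆ F ∪ ⋃ i ∈ Finset.Icc 1 h, itSum A i := by
    intro x _
    by_cases hxF : x ∈ F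
    · exact Or.inl hxF
    · rcases hcov x hxF with ⟨i, hi1, hih, hxi⟩
      exact Or.inr (Set.mem_biUnion (Finset.mem_coe.mpr (Finset.mem_Icc.mpr ⟨hi1, hih⟩)) hxi)
  exact Set.infinite_univ (Set.Finite.subset (hF.union hU) hsub)


theorem egcd_eq_one (hF : F.Finite)
    (hcov : ∀ x : G, x ∉ F → ∃ i, 1 ≤ i ∧ i ≤ h ∧ x ∈ itSum A i)
    (hgen : AddSubgroup.closure (A - A) = ⊤) : egcd A h = 1 := by
  obtain ⟨a₀, ha₀⟩ := (A_infinite hF hcov).nonempty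
  set e := egcd A h with he
  let K : AddSubgroup G :=
    { carrier := {g | ∃ n m : ℕ, ∃ u v : G, 1 ≤ n ∧ 1 ≤ m ∧ u ∈ itSum A n ∧ v ∈ itSum A m ∧
        g = u - v ∧ (e : ℤ) ∣ (n : ℤ) - m}
      zero_mem' := ⟨1, 1, a₀, a₀, le_refl _, le_refl _, mem_itSum_one ha₀, mem_itSum_one ha₀,
        by simp, by simp⟩
      add_mem' := by
        rintro x y ⟨n, m, u, v, hn, hm, hu, hv, rfl, hd⟩ ⟨n', m', u', v', hn', hm', hu', hv', rfl, hd'⟩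
        refine ⟨n + n', m + m', u + u', v + v', by omega, by omega,
          add_mem_itSum hu hu', add_mem_itSum hv hv', by abel, ?_⟩
        have := dvd_add hd hd'
        have heq : ((n : ℤ) - m) + ((n' : ℤ) - m') = ((n + n' : ℕ) : ℤ) - ((m + m' : ℕ) : ℤ) := by
          push_cast; ring
        rwa [heq] at this
      neg_mem' := by
        rintro x ⟨n, m, u, v, hn, hm, hu, hv, rfl, hd⟩
        refine ⟨m, n, v, u, hm, hn, hv, hu, by abel, ?_⟩
        have := hd.neg_right
        have heq : -((n : ℤ) - m) = (m : ℤ) - n := by ring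
        rwa [heq] at this }
  have hsub : A - A ⊆ (K : Set G) := by
    rintro g hg
    rcases Set.mem_sub.mp hg with ⟨a, ha, b, hb, rfl⟩
    exact ⟨1, 1, a, b, le_refl _, le_refl _, mem_itSum_one ha, mem_itSum_one hb, rfl, by simp⟩
  have htop : ∀ g : G, g ∈ K := by
    intro g
    have h1 : AddSubgroup.closure (A - A) ≤ K := (AddSubgroup.closure_le K).mpr hsub
    rw [hgen] at h1
    exact h1 (AddSubgroup.mem_top g)
  rcases htop a₀ with ⟨n, m, u, v, hn, hm, hu, hv, heq, hd⟩
  have hz1 : u + a₀ ∈ itSum A (n + 1) := add_mem_itSum hu (mem_itSum_one ha₀)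
  have hueq : u = a₀ + v := by
    rw [heq]; abel
  have hz2 : u + a₀ ∈ itSum A (2 + m) := by
    have h2 : a₀ + a₀ ∈ itSum A 2 := add_mem_itSum (mem_itSum_one ha₀) (mem_itSum_one ha₀)
    have : u + a₀ = (a₀ + a₀) + v := by rw [hueq]; abel
    rw [this]
    exact add_mem_itSum h2 hv
  have hd2 := gap_all hF hcov (u + a₀) (n + 1) (2 + m) hz1 hz2
  have hone : (e : ℤ) ∣ 1 := by
    have hdiff := dvd_sub hd hd2
    have heq2 : ((n : ℤ) - m) - (((n + 1 : ℕ) : ℤ) - ((2 + m : ℕ) : ℤ)) = 1 := by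
      push_cast; ring
    rwa [heq2] at hdiff
  have : e ∣ 1 := by exact_mod_cast hone
  exact Nat.dvd_one.mp this

end WithCover


theorem int_eq_zero_of_dvd_of_small {a v : ℤ} (ha : 0 < a) (hd : a ∣ v)
    (h1 : -a < v) (h2 : v < a) : v = 0 := by
  obtain ⟨t, rfl⟩ := hd
  rcases lt_trichotomy t 0 with ht | ht | ht
  · nlinarith
  · simp [ht]
  · nlinarith

theorem exists_digit {d g : ℕ} (hd : 1 ≤ d) (hg : 1 ≤ g) (x : ℤ)
    (hx : (Nat.gcd d g : ℤ) ∣ x) :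
    ∃ c : ℕ, c < d / Nat.gcd d g ∧ (d : ℤ) ∣ x - c * g := by
  set d' := Nat.gcd d g with hd'
  have hd'1 : 1 ≤ d' := Nat.gcd_pos_of_pos_left g hd
  set D := d / d' with hD
  have hdd : d = d' * D := (Nat.mul_div_cancel' (Nat.gcd_dvd_left d g)).symm
  have hD1 : 1 ≤ D := by
    rcases Nat.eq_zero_or_pos D with h0 | h0
    · rw [h0, Nat.mul_zero] at hdd; omega
    · exact h0
  by_cases hDone : D = 1
  · refine ⟨0, by omega, ?_⟩
    have : d = d' := by rw [hdd, hDone, Nat.mul_one]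
    rw [this]
    simpa using hx
  · have hD2 : 2 ≤ D := by omega
    haveI : NeZero D := ⟨by omega⟩
    set g' := g / d' with hg'
    have hgg : g = d' * g' := (Nat.mul_div_cancel' (Nat.gcd_dvd_right d g)).symm
    have hcop : Nat.Coprime D g' := Nat.coprime_div_gcd_div_gcd hd'1
    obtain ⟨x', hx'⟩ := hx
    let u : (ZMod D)ˣ := ZMod.unitOfCoprime g' hcop.symm
    let z : ZMod D := (x' : ZMod D) * ↑u⁻¹
    refine ⟨z.val, ?_, ?_⟩
    · exact ZMod.val_lt z
    · have key : (D : ℤ) ∣ x' - (z.val : ℤ) * g' := by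
        have h0 : ((x' - (z.val : ℤ) * g' : ℤ) : ZMod D) = 0 := by
          push_cast
          have hval : ((z.val : ℕ) : ZMod D) = z := ZMod.natCast_rightInverse z
          rw [hval]
          have hgu : ((g' : ℕ) : ZMod D) = (u : ZMod D) := (ZMod.coe_unitOfCoprime g' hcop.symm).symm
          rw [hgu]
          show (x' : ZMod D) - (x' : ZMod D) * ↑u⁻¹ * ↑u = 0
          rw [mul_assoc, Units.inv_mul, mul_one, sub_self]
        exact (ZMod.intCast_zmod_eq_zero_iff_dvd _ _).mp h0
      obtain ⟨t, ht⟩ := key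
      refine ⟨t, ?_⟩
      have hxx : x = (d' : ℤ) * x' := by rw [hx']
      rw [hxx]
      have hgz : ((g : ℕ) : ℤ) = (d' : ℤ) * (g' : ℤ) := by exact_mod_cast hgg
      have : ((d' : ℤ)) * x' - (z.val : ℤ) * g = (d' : ℤ) * (x' - (z.val : ℤ) * g') := by
        rw [hgz]; ring
      rw [this, ht]
      have hdz : ((d : ℕ) : ℤ) = (d' : ℤ) * (D : ℤ) := by exact_mod_cast hdd
      rw [hdz]; ring


section Witness

variable {G : Type*} [AddCommGroup G]

open Classical in
noncomputable def wp (A : Set G) (h g : ℕ) : ℕ :=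
  if hw : HasWit A h g then hw.choose else 0

open Classical in
noncomputable def wy (A : Set G) (h g : ℕ) : G :=
  if hw : HasWit A h g then hw.choose_spec.choose else 0

theorem wit_spec {A : Set G} {h g : ℕ} (hg : g ∈ gapSet A h) :
    1 ≤ wp A h g ∧ wp A h g + g ≤ h + 1 ∧ wy A h g ∈ itSum A (wp A h g) ∧
      wy A h g ∈ itSum A (wp A h g + g) := by
  classical
  have hw : HasWit A h g := (Finset.mem_filter.mp hg).2
  simp only [wp, wy, dif_pos hw]
  exact hw.choose_spec.choose_spec

noncomputable def wsum (A : Set G) (h : ℕ) (M : Multiset ℕ) : G := (M.map (wy A h)).sum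

noncomputable def lenA (A : Set G) (h : ℕ) (M : Multiset ℕ) : ℕ := (M.map (wp A h)).sum

theorem wsum_mem_low {A : Set G} {h : ℕ} {M : Multiset ℕ}
    (hM : ∀ g ∈ M, g ∈ gapSet A h) : wsum A h M ∈ itSum A (lenA A h M) := by
  induction M using Multiset.induction with
  | empty => simp [wsum, lenA, itSum]
  | cons g M ih =>
    have hg : g ∈ gapSet A h := hM g (Multiset.mem_cons_self g M)
    have hM' : ∀ g' ∈ M, g' ∈ gapSet A h := fun g' hg' => hM g' (Multiset.mem_cons_of_mem hg')
    simp only [wsum, lenA, Multiset.map_cons, Multiset.sum_cons]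
    exact add_mem_itSum (wit_spec hg).2.2.1 (ih hM')

theorem wsum_mem_high {A : Set G} {h : ℕ} {M : Multiset ℕ}
    (hM : ∀ g ∈ M, g ∈ gapSet A h) : wsum A h M ∈ itSum A (lenA A h M + M.sum) := by
  induction M using Multiset.induction with
  | empty => simp [wsum, lenA, itSum]
  | cons g M ih =>
    have hg : g ∈ gapSet A h := hM g (Multiset.mem_cons_self g M)
    have hM' : ∀ g' ∈ M, g' ∈ gapSet A h := fun g' hg' => hM g' (Multiset.mem_cons_of_mem hg')
    simp only [wsum, lenA, Multiset.map_cons, Multiset.sum_cons]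
    have := add_mem_itSum (wit_spec hg).2.2.2 (ih hM')
    simp only [lenA, wsum] at this
    have heq : wp A h g + g + ((Multiset.map (wp A h) M).sum + M.sum)
        = wp A h g + (Multiset.map (wp A h) M).sum + (g + M.sum) := by ring
    rw [heq] at this
    exact this

theorem wsum_mem_mid {A : Set G} {h : ℕ} {M N : Multiset ℕ}
    (hM : ∀ g ∈ M, g ∈ gapSet A h) (hN : N ≤ M) :
    wsum A h M ∈ itSum A (lenA A h M + N.sum) := by
  obtain ⟨K, rfl⟩ := Multiset.le_iff_exists_add.mp hN
  have hNmem : ∀ g ∈ N, g ∈ gapSet A h := fun g hg => hM g (Multiset.mem_add.mpr (Or.inl hg))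
  have hKmem : ∀ g ∈ K, g ∈ gapSet A h := fun g hg => hM g (Multiset.mem_add.mpr (Or.inr hg))
  have hsplit : wsum A h (N + K) = wsum A h N + wsum A h K := by
    simp [wsum, Multiset.map_add]
  have hlen : lenA A h (N + K) = lenA A h N + lenA A h K := by
    simp [lenA, Multiset.map_add]
  rw [hsplit, hlen]
  have := add_mem_itSum (wsum_mem_high hNmem) (wsum_mem_low hKmem)
  have heq : (lenA A h N + N.sum) + lenA A h K = lenA A h N + lenA A h K + N.sum := by ring
  rw [heq] at this
  exact this

end Witness

theorem digits_lemma (Γ : Finset ℕ) (hpos : ∀ g ∈ Γ, 1 ≤ g) (hgcd : Γ.gcd id = 1)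
    (g₁ : ℕ) (hg₁ : g₁ ∈ Γ) :
    ∃ M : Multiset ℕ, (∀ g ∈ M, g ∈ Γ) ∧ M.card + 1 ≤ g₁ ∧
      ∀ x : ℤ, ∃ N, N ≤ M ∧ ((g₁ : ℕ) : ℤ) ∣ x - (N.sum : ℤ) := by
  have hg₁pos : 1 ≤ g₁ := hpos g₁ hg₁
  have DESC : ∀ d : ℕ, 1 ≤ d → d ∣ g₁ →
      (∃ M : Multiset ℕ, (∀ g ∈ M, g ∈ Γ) ∧ (M.card + 1) * d ≤ g₁ ∧
        ∀ x : ℤ, (d : ℤ) ∣ x → ∃ N, N ≤ M ∧ ((g₁ : ℕ) : ℤ) ∣ x - (N.sum : ℤ)) →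
      (∃ M : Multiset ℕ, (∀ g ∈ M, g ∈ Γ) ∧ M.card + 1 ≤ g₁ ∧
        ∀ x : ℤ, ∃ N, N ≤ M ∧ ((g₁ : ℕ) : ℤ) ∣ x - (N.sum : ℤ)) := by
    intro d
    induction d using Nat.strong_induction_on with
    | _ d ih =>
      intro hd1 hdg₁ hP
      rcases hP with ⟨M, hMΓ, hMc, hMcov⟩
      by_cases hd : d = 1
      · subst hd
        refine ⟨M, hMΓ, by simpa using hMc, fun x => hMcov x (one_dvd x)⟩
      · have hex : ∃ g ∈ Γ, ¬ d ∣ g := by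
          by_contra hall
          push_neg at hall
          have : d ∣ Γ.gcd id := Finset.dvd_gcd fun g hg => hall g hg
          rw [hgcd] at this
          exact hd (Nat.dvd_one.mp this)
        rcases hex with ⟨g, hgΓ, hndvd⟩
        set d' := Nat.gcd d g with hd'def
        have hd'1 : 1 ≤ d' := Nat.gcd_pos_of_pos_left g (by omega)
        have hd'd : d' ∣ d := Nat.gcd_dvd_left d g
        have hlt : d' < d := by
          rcases lt_or_eq_of_le (Nat.le_of_dvd (by omega) hd'd) with hlt | heq
          · exact hlt
          · exfalso; apply hndvd; rw [← heq] at *; exact heq ▸ Nat.gcd_dvd_right d g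
        set b := d / d' with hbdef
        have hb : d = d' * b := (Nat.mul_div_cancel' hd'd).symm
        have hb2 : 2 ≤ b := by
          rcases Nat.lt_or_ge b 2 with hb' | hb'
          · interval_cases b
            · rw [Nat.mul_zero] at hb; omega
            · rw [Nat.mul_one] at hb; omega
          · exact hb'
        set M' := M + Multiset.replicate (b - 1) g with hM'def
        apply ih d' hlt hd'1 (hd'd.trans hdg₁)
        refine ⟨M', ?_, ?_, ?_⟩
        · intro g' hg'
          rcases Multiset.mem_add.mp hg' with hg' | hg'
          · exact hMΓ g' hg'
          · rw [Multiset.eq_of_mem_replicate hg']; exact hgΓ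
        · have hcard : M'.card = M.card + (b - 1) := by
            simp [hM'def, Multiset.card_replicate]
          rw [hcard]
          have h1 : (M.card + (b - 1) + 1) = M.card + b := by omega
          rw [h1]
          have h2 : (M.card + b) * d' ≤ ((M.card + 1) * b) * d' := by
            apply Nat.mul_le_mul_right
            have : M.card + 1 * b ≤ M.card * b + 1 * b := by
              apply Nat.add_le_add
              · exact Nat.le_mul_of_pos_right _ (by omega)
              · exact le_refl _
            calc M.card + b = M.card + 1 * b := by rw [Nat.one_mul]
              _ ≤ M.card * b + 1 * b := this
              _ = (M.card + 1) * b := by ring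
          calc (M.card + b) * d' ≤ ((M.card + 1) * b) * d' := h2
            _ = (M.card + 1) * (d' * b) := by ring
            _ = (M.card + 1) * d := by rw [← hb]
            _ ≤ g₁ := hMc
        · intro x hx
          have hxg : ((Nat.gcd d g : ℕ) : ℤ) ∣ x := by rw [← hd'def]; exact hx
          rcases exists_digit (by omega) (hpos g hgΓ) x hxg with ⟨c, hc, hdvd⟩
          have hcb : c < b := by rw [hbdef, hd'def]; exact hc
          rcases hMcov (x - c * g) hdvd with ⟨N, hN, hNd⟩
          refine ⟨N + Multiset.replicate c g, ?_, ?_⟩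
          · exact add_le_add hN (Multiset.replicate_le_replicate g |>.mpr (by omega))
          · have hsum : (N + Multiset.replicate c g).sum = N.sum + c * g := by
              simp [Multiset.sum_replicate, smul_eq_mul]
            rw [hsum]
            have heq : x - ((N.sum + c * g : ℕ) : ℤ) = (x - c * g) - (N.sum : ℤ) := by
              push_cast; ring
            rw [heq]
            exact hNd
  apply DESC g₁ hg₁pos dvd_rfl
  refine ⟨0, by simp, by simpa using hg₁pos, ?_⟩
  intro x hx
  exact ⟨0, le_refl _, by simpa using hx⟩


theorem bound_arith (h g₁ α₁ cM lenM T n₁ : ℕ)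
    (hh : 1 ≤ h) (hg₁h : g₁ ≤ h) (hg₁1 : 1 ≤ g₁)
    (hα : α₁ + g₁ ≤ h + 1)
    (hcard : cM + 1 ≤ g₁)
    (hlenT : lenM + T ≤ (h + 1) * cM)
    (hTub : T ≤ h * cM)
    (hn₁ : n₁ * g₁ ≤ T + h - g₁) :
    n₁ * α₁ + lenM + (T + 1 + (h - g₁)) ≤ h ^ 2 + h - 1 := by
  have hgh : g₁ ≤ T + h := by omega
  have h1hh : 1 ≤ h ^ 2 + h := le_trans hh (Nat.le_add_left h (h ^ 2))
  zify [hgh] at hn₁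
  zify [hg₁h, h1hh]
  zify at hα hcard hlenT hTub
  have hh' : (1 : ℤ) ≤ h := by exact_mod_cast hh
  have hg1' : (1 : ℤ) ≤ g₁ := by exact_mod_cast hg₁1
  have hgh' : (g₁ : ℤ) ≤ h := by exact_mod_cast hg₁h
  have hT0 : (0 : ℤ) ≤ T := by positivity
  have hc0 : (0 : ℤ) ≤ cM := by positivity
  have ha0 : (0 : ℤ) ≤ α₁ := by positivity
  have hn0 : (0 : ℤ) ≤ n₁ := by positivity
  have s1 : (T : ℤ) ≤ h * g₁ - h := by
    have : (h : ℤ) * cM ≤ h * (g₁ - 1) := by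
      apply mul_le_mul_of_nonneg_left _ (by linarith)
      linarith
    linarith
  have s2 : (n₁ : ℤ) * g₁ ≤ h * g₁ - g₁ := by linarith
  have s3 : (n₁ : ℤ) ≤ h - 1 := by nlinarith
  have s4 : (n₁ : ℤ) * α₁ ≤ (h - 1) * (h + 1 - g₁) := by
    apply mul_le_mul s3 (by linarith) ha0 (by linarith)
  have s5 : (lenM : ℤ) ≤ (h + 1) * (g₁ - 1) - T := by
    have : ((h : ℤ) + 1) * cM ≤ (h + 1) * (g₁ - 1) := by
      apply mul_le_mul_of_nonneg_left _ (by linarith)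
      linarith
    linarith
  nlinarith [s4, s5]


theorem key {G : Type*} [AddCommGroup G] [Infinite G] (A : Set G) (h : ℕ) (hh : 1 ≤ h)
    (F : Set G) (hF : F.Finite)
    (hcov : ∀ x : G, x ∉ F → ∃ i, 1 ≤ i ∧ i ≤ h ∧ x ∈ itSum A i)
    (hgen : AddSubgroup.closure (A - A) = ⊤) :
    ∃ k, 1 ≤ k ∧ k ≤ h ^ 2 + h - 1 ∧ (Set.univ \ itSum A k).Finite := by
  classical
  have he : egcd A h = 1 := egcd_eq_one hF hcov hgen
  have hne : (gapSet A h).Nonempty := by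
    rw [Finset.nonempty_iff_ne_empty]
    intro hemp
    rw [egcd, hemp] at he
    simp at he
  obtain ⟨g₁, hg₁⟩ := hne
  have hpos : ∀ g ∈ gapSet A h, 1 ≤ g := by
    intro g hg
    exact (Finset.mem_Icc.mp (Finset.mem_filter.mp hg).1).1
  have hbh : ∀ g ∈ gapSet A h, g ≤ h := by
    intro g hg
    exact (Finset.mem_Icc.mp (Finset.mem_filter.mp hg).1).2
  have hg₁1 : 1 ≤ g₁ := hpos g₁ hg₁
  have hg₁h : g₁ ≤ h := hbh g₁ hg₁
  obtain ⟨M, hMΓ, hMcard, hMcov⟩ := digits_lemma (gapSet A h) hpos he g₁ hg₁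
  set T := M.sum with hTdef
  have hsum_mono : ∀ N : Multiset ℕ, N ≤ M → N.sum ≤ T := by
    intro N hN
    obtain ⟨K, rfl⟩ := Multiset.le_iff_exists_add.mp hN
    rw [hTdef, Multiset.sum_add]
    exact Nat.le_add_right _ _
  -- T ≥ g₁ - 1
  have hTlb : g₁ - 1 ≤ T := by
    obtain ⟨N, hNM, hNd⟩ := hMcov ((g₁ : ℤ) - 1)
    have hs : N.sum ≤ T := hsum_mono N hNM
    rcases le_or_gt (g₁ - 1) N.sum with hle | hlt
    · omega
    · exfalso
      have hv0 : ((g₁ : ℤ) - 1 - (N.sum : ℤ)) = 0 := by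
        apply int_eq_zero_of_dvd_of_small (a := (g₁ : ℤ)) (by exact_mod_cast hg₁1) hNd
        · have : (N.sum : ℤ) ≥ 0 := by positivity
          omega
        · have : ((N.sum : ℤ)) ≥ 0 := by positivity
          omega
      have : (N.sum : ℤ) = (g₁ : ℤ) - 1 := by omega
      omega
  set n₁ := (T + h - g₁) / g₁ with hn₁def
  set Mfull := Multiset.replicate n₁ g₁ + M with hMfulldef
  have hMfullΓ : ∀ g ∈ Mfull, g ∈ gapSet A h := by
    intro g hg
    rcases Multiset.mem_add.mp hg with hg | hg
    · rw [Multiset.eq_of_mem_replicate hg]; exact hg₁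
    · exact hMΓ g hg
  set B := lenA A h Mfull with hBdef
  set W := T + 1 + (h - g₁) with hWdef
  set u := wsum A h Mfull with hudef
  have hWh : h ≤ W := by omega
  -- window
  have hwin : ∀ j, 1 ≤ j → j ≤ h → u ∈ itSum A (B + W - j) := by
    intro j hj1 hjh
    obtain ⟨N, hNM, hNd⟩ := hMcov ((W : ℤ) - j)
    have hs : N.sum ≤ T := hsum_mono N hNM
    have hWjZ : ((W : ℤ)) - j = (T : ℤ) + 1 + h - g₁ - j := by
      have : (W : ℕ) = T + 1 + (h - g₁) := rfl
      rw [this]; push_cast [hg₁h]; omega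
    have hge : (0 : ℤ) ≤ (W : ℤ) - j - N.sum := by
      by_contra hlt
      push_neg at hlt
      have hv0 : ((W : ℤ) - j - N.sum) = 0 := by
        apply int_eq_zero_of_dvd_of_small (a := (g₁ : ℤ)) (by exact_mod_cast hg₁1) hNd
        · have h1 : (N.sum : ℤ) ≤ T := by exact_mod_cast hs
          have h2 : (j : ℤ) ≤ h := by exact_mod_cast hjh
          omega
        · have : (g₁ : ℤ) ≥ 1 := by exact_mod_cast hg₁1
          omega
      omega
    obtain ⟨t, ht⟩ := hNd
    have ht0 : 0 ≤ t := by
      rcases le_or_gt 0 t with h0 | h0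
      · exact h0
      · exfalso
        have hg1Z : (1 : ℤ) ≤ g₁ := by exact_mod_cast hg₁1
        nlinarith [ht, hge]
    set q := t.toNat with hqdef
    have hqZ : (q : ℤ) = t := Int.toNat_of_nonneg ht0
    have hvq : (W : ℤ) - j - N.sum = (g₁ : ℤ) * q := by rw [hqZ, ← ht]
    have hqn₁ : q ≤ n₁ := by
      have hq1 : (q : ℤ) * g₁ ≤ (T : ℤ) + h - g₁ := by
        have h1 : (N.sum : ℤ) ≥ 0 := by positivity
        have h2 : (1 : ℤ) ≤ j := by exact_mod_cast hj1
        nlinarith [hvq, hWjZ]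
      have hq2 : q * g₁ ≤ T + h - g₁ := by
        have hcast : ((T + h - g₁ : ℕ) : ℤ) = (T : ℤ) + h - g₁ := by
          push_cast [show g₁ ≤ T + h by omega]; ring
        have : ((q * g₁ : ℕ) : ℤ) ≤ ((T + h - g₁ : ℕ) : ℤ) := by
          rw [hcast]; push_cast; exact hq1
        exact_mod_cast this
      rw [hn₁def]
      exact (Nat.le_div_iff_mul_le (by omega)).mpr hq2
    have hNβ : Multiset.replicate q g₁ + N ≤ Mfull := by
      rw [hMfulldef]
      exact add_le_add ((Multiset.replicate_le_replicate g₁).mpr hqn₁) hNM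
    have hmem := wsum_mem_mid hMfullΓ hNβ
    have hNβsum : (Multiset.replicate q g₁ + N).sum = q * g₁ + N.sum := by
      simp [Multiset.sum_replicate, smul_eq_mul]
    rw [hNβsum] at hmem
    have hidx : B + W - j = B + (q * g₁ + N.sum) := by
      have hZ : (q : ℤ) * g₁ + N.sum = (W : ℤ) - j := by linarith [hvq]
      have hjW : j ≤ W := le_trans hjh hWh
      have : (q * g₁ + N.sum : ℕ) = W - j := by
        have hcast : ((W - j : ℕ) : ℤ) = (W : ℤ) - j := by omega
        have : ((q * g₁ + N.sum : ℕ) : ℤ) = ((W - j : ℕ) : ℤ) := by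
          rw [hcast, Nat.cast_add, Nat.cast_mul]; linarith [hZ]
        exact_mod_cast this
      omega
    rw [hidx]
    exact hmem
  -- arithmetic bound
  set α₁ := wp A h g₁ with hα₁def
  have hα : α₁ + g₁ ≤ h + 1 := (wit_spec hg₁).2.1
  have hB : B = n₁ * α₁ + lenA A h M := by
    rw [hBdef, hMfulldef]
    simp [lenA, Multiset.map_add, Multiset.sum_add, Multiset.map_replicate,
      Multiset.sum_replicate, smul_eq_mul]
    exact Or.inl rfl
  have hlenT : lenA A h M + T ≤ (h + 1) * M.card := by
    have heq : lenA A h M + T = (M.map (fun g => wp A h g + g)).sum := by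
      rw [hTdef, lenA]
      rw [show (M.map fun g => wp A h g + g).sum = (M.map (wp A h)).sum + (M.map id).sum from
        by rw [← Multiset.sum_map_add]; congr 1]
      rw [Multiset.map_id]
    rw [heq]
    have := Multiset.sum_le_card_nsmul (M.map (fun g => wp A h g + g)) (h + 1) ?_
    · simpa [Multiset.card_map, smul_eq_mul, Nat.mul_comm] using this
    · intro x hx
      rcases Multiset.mem_map.mp hx with ⟨g, hgM, rfl⟩
      exact (wit_spec (hMΓ g hgM)).2.1
  have hTub : T ≤ h * M.card := by
    rw [hTdef]
    have := Multiset.sum_le_card_nsmul M h ?_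
    · simpa [smul_eq_mul, Nat.mul_comm] using this
    · intro g hg
      exact hbh g (hMΓ g hg)
  have hn₁mul : n₁ * g₁ ≤ T + h - g₁ := by
    rw [hn₁def]
    exact Nat.div_mul_le_self _ _
  have hbound : B + W ≤ h ^ 2 + h - 1 := by
    rw [hB, hWdef]
    have := bound_arith h g₁ α₁ M.card (lenA A h M) T n₁ hh hg₁h hg₁1 hα hMcard hlenT hTub hn₁mul
    omega
  refine ⟨B + W, by omega, hbound, ?_⟩
  -- covering
  have hEfin : ((fun x => x - u) ⁻¹' F).Finite :=
    hF.preimage (Function.Injective.injOn (sub_left_injective))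
  apply Set.Finite.subset hEfin
  intro x hx
  rcases hx with ⟨-, hxk⟩
  by_contra hxE
  apply hxk
  rcases hcov (x - u) hxE with ⟨i, hi1, hih, hxi⟩
  have hu := hwin i hi1 hih
  have hadd := add_mem_itSum hu hxi
  have hidx : (B + W - i) + i = B + W := by
    have : i ≤ W := le_trans hih hWh
    omega
  rw [hidx] at hadd
  have : u + (x - u) = x := by abel
  rwa [this] at hadd

end Stmt13Aux

theorem stmt_13 {G : Type*} [AddCommGroup G] [Infinite G] (h : ℕ) (hh : 1 ≤ h)
    (hfin : ∀ m, 1 ≤ m → m ≤ h → Finite (G ⧸ mulSubgroup G m))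
    (A : Set G) (hA : SimEq (⋃ i ∈ Finset.Icc 1 h, itSum A i) Set.univ)
    (hgen : AddSubgroup.closure (A - A) = ⊤) :
    ∃ k, 1 ≤ k ∧
      k ≤ h ^ 2 + h * (Finset.Icc 1 h).sup
          (fun m => (Nat.card (G ⧸ mulSubgroup G m)).primeFactorsList.length)
        + h - 1 ∧
      SimEq (itSum A k) Set.univ := by

  classical
  set S := (Finset.Icc 1 h).sup
      (fun m => (Nat.card (G ⧸ mulSubgroup G m)).primeFactorsList.length) with hS
  set U := ⋃ i ∈ Finset.Icc 1 h, itSum A i with hU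
  have hFfin : (Set.univ \ U).Finite := by
    apply Set.Finite.subset hA
    intro x hx
    rw [Set.mem_symmDiff]
    exact Or.inr ⟨hx.1, hx.2⟩
  have hcov : ∀ x : G, x ∉ (Set.univ \ U) → ∃ i, 1 ≤ i ∧ i ≤ h ∧ x ∈ itSum A i := by
    intro x hx
    have hxU : x ∈ U := by
      by_contra hxU
      exact hx ⟨Set.mem_univ x, hxU⟩
    rw [hU, Set.mem_iUnion₂] at hxU
    rcases hxU with ⟨i, hi, hxi⟩
    rcases Finset.mem_Icc.mp hi with ⟨hi1, hih⟩
    exact ⟨i, hi1, hih, hxi⟩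
  obtain ⟨k, hk1, hk2, hk3⟩ := Stmt13Aux.key A h hh (Set.univ \ U) hFfin hcov hgen
  refine ⟨k, hk1, ?_, ?_⟩
  · calc k ≤ h ^ 2 + h - 1 := hk2
      _ ≤ h ^ 2 + h * S + h - 1 := by
        apply Nat.sub_le_sub_right
        calc h ^ 2 + h ≤ (h ^ 2 + h * S) + h :=
          Nat.add_le_add (Nat.le_add_right (h ^ 2) (h * S)) (le_refl h)
          _ = h ^ 2 + h * S + h := rfl
  · rw [SimEq]
    apply Set.Finite.subset hk3
    intro x hx
    rw [Set.mem_symmDiff] at hx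
    rcases hx with ⟨_, hx2⟩ | ⟨hx1, hx2⟩
    · exact absurd (Set.mem_univ x) hx2
    · exact ⟨hx1, hx2⟩
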